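/- Let (P_{s,t}) be a θ-periodic Markovian transition semigroup that is regular at (s, s+θ) for every s ∈ [0,θ). Then there is at most one family of probability measures (μ_s)_{s≥0} that is θ-periodic with respect to (P_{s,t}), i.e., satisfying μ_s(A) = ∫ P(s,x,s+θ,A) μ_s(dx) for all Borel A and s ≥ 0. -/
import Mathlib
open MeasureTheory

lemma key_lemma {X : Type*} [MeasurableSpace X]
    (q : X → Measure X) (hprob : ∀ x, IsProbabilityMeasure (q x))
    (hmeas : ∀ A : Set X, MeasurableSet A → Measurable fun x => q x A)
    (hreg : ∀ x y, q x ≪ q y)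
    (μ ν : Measure X) [IsProbabilityMeasure μ] [IsProbabilityMeasure ν]
    (hμ : ∀ A : Set X, MeasurableSet A → μ A = ∫⁻ x, q x A ∂μ)
    (hν : ∀ A : Set X, MeasurableSet A → ν A = ∫⁻ x, q x A ∂ν)
    (A : Set X) (hA : MeasurableSet A) (hlt : ν A < μ A) : False := by
  obtain ⟨S, hS, hSpos, hSneg⟩ := hahn_decomposition (μ := μ) (ν := ν)
  -- ν S < μ S
  have hAS : ν (A ∩ S) < μ (A ∩ S) := by
    have h1 : μ (A \ S) ≤ ν (A \ S) := hSneg _ (hA.diff hS) (by intro x hx; exact hx.2)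
    have h2 : μ A = μ (A ∩ S) + μ (A \ S) := (measure_inter_add_diff A hS).symm
    have h3 : ν A = ν (A ∩ S) + ν (A \ S) := (measure_inter_add_diff A hS).symm
    by_contra hc
    push_neg at hc
    exact absurd (h3 ▸ h2 ▸ hlt) (not_lt.2 (add_le_add hc h1))
  have hSlt : ν S < μ S := by
    have h1 : ν (S \ A) ≤ μ (S \ A) := hSpos _ (hS.diff hA) (by intro x hx; exact hx.1)
    have h2 : μ S = μ (S ∩ A) + μ (S \ A) := (measure_inter_add_diff S hA).symm
    have h3 : ν S = ν (S ∩ A) + ν (S \ A) := (measure_inter_add_diff S hA).symm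
    rw [h2, h3, Set.inter_comm S A]
    exact ENNReal.add_lt_add_of_lt_of_le (measure_ne_top _ _) hAS h1
  -- case: some q x S = 0
  by_cases hzero : ∃ x, q x S = 0
  · obtain ⟨x₁, hx₁⟩ := hzero
    have hall : ∀ x, q x S = 0 := fun x => hreg x x₁ hx₁
    have : μ S = 0 := by
      rw [hμ S hS]
      simp [hall]
    exact absurd (this ▸ hSlt) (by simp)
  · push_neg at hzero
    have hf : Measurable fun x => q x S := hmeas S hS
    have hfc : Measurable fun x => q x Sᶜ := hmeas Sᶜ hS.compl
    -- B = C for both measures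
    have key : ∀ ρ : Measure X, IsProbabilityMeasure ρ →
        (∀ A : Set X, MeasurableSet A → ρ A = ∫⁻ x, q x A ∂ρ) →
        ∫⁻ x in Sᶜ, q x S ∂ρ = ∫⁻ x in S, q x Sᶜ ∂ρ := by
      intro ρ hρ hinv
      have hsplit : (∫⁻ x in S, q x S ∂ρ) + ∫⁻ x in Sᶜ, q x S ∂ρ = ρ S :=
        (lintegral_add_compl _ hS).trans (hinv S hS).symm
      have hone : (∫⁻ x in S, q x S ∂ρ) + ∫⁻ x in S, q x Sᶜ ∂ρ = ρ S := by
        rw [← lintegral_add_left hf]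
        have : ∀ x, q x S + q x Sᶜ = 1 := fun x => by
          rw [measure_add_measure_compl hS, measure_univ]
        simp only [this]
        simp
      have hfin : (∫⁻ x in S, q x S ∂ρ) ≠ ⊤ :=
        ne_top_of_le_ne_top (measure_ne_top ρ S) (le_trans le_self_add hsplit.le)
      exact (ENNReal.add_right_inj hfin).1 (hsplit.trans hone.symm)
    -- strict inequality B_μ < B_ν
    have hle : μ.restrict Sᶜ ≤ ν.restrict Sᶜ := by
      refine Measure.le_iff.2 fun t ht => ?_
      rw [Measure.restrict_apply ht, Measure.restrict_apply ht]
      exact hSneg _ (ht.inter hS.compl) (by intro x hx; exact hx.2)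
    have hτ : ν.restrict Sᶜ = (ν.restrict Sᶜ - μ.restrict Sᶜ) + μ.restrict Sᶜ :=
      (Measure.sub_add_cancel_of_le hle).symm
    have hτuniv : (ν.restrict Sᶜ - μ.restrict Sᶜ) Set.univ = ν Sᶜ - μ Sᶜ := by
      rw [Measure.sub_apply MeasurableSet.univ hle]
      simp [Measure.restrict_apply, hS.compl]
    have hcomlt : μ Sᶜ < ν Sᶜ := by
      by_contra hc
      push_neg at hc
      have h1 : μ S + μ Sᶜ = 1 := by rw [measure_add_measure_compl hS, measure_univ]
      have h2 : ν S + ν Sᶜ = 1 := by rw [measure_add_measure_compl hS, measure_univ]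
      have : ν S + ν Sᶜ < μ S + μ Sᶜ :=
        ENNReal.add_lt_add_of_lt_of_le (measure_ne_top _ _) hSlt hc
      rw [h1, h2] at this; exact lt_irrefl _ this
    have hτpos : 0 < ∫⁻ x, q x S ∂(ν.restrict Sᶜ - μ.restrict Sᶜ) := by
      rw [lintegral_pos_iff_support hf]
      have : Function.support (fun x => q x S) = Set.univ := by
        ext x; simp [Function.mem_support, (hzero x)]
      rw [this, hτuniv]
      exact tsub_pos_of_lt hcomlt
    have hBμfin : (∫⁻ x in Sᶜ, q x S ∂μ) ≠ ⊤ := by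
      have hle1 : (∫⁻ x in Sᶜ, q x S ∂μ) ≤ μ Sᶜ := by
        calc ∫⁻ x in Sᶜ, q x S ∂μ ≤ ∫⁻ _ in Sᶜ, 1 ∂μ :=
              lintegral_mono fun x => prob_le_one
          _ = μ Sᶜ := by simp
      exact ne_top_of_le_ne_top (measure_ne_top μ Sᶜ) hle1
    have hBlt : (∫⁻ x in Sᶜ, q x S ∂μ) < ∫⁻ x in Sᶜ, q x S ∂ν := by
      calc (∫⁻ x in Sᶜ, q x S ∂μ)
          < (∫⁻ x, q x S ∂(ν.restrict Sᶜ - μ.restrict Sᶜ)) + ∫⁻ x in Sᶜ, q x S ∂μ :=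
            ENNReal.lt_add_right hBμfin (ne_of_gt hτpos) |>.trans_eq (add_comm _ _) |>.trans_le le_rfl
        _ = ∫⁻ x in Sᶜ, q x S ∂ν := by
            conv_rhs => rw [show ν.restrict Sᶜ = (ν.restrict Sᶜ - μ.restrict Sᶜ) + μ.restrict Sᶜ from hτ]
            rw [lintegral_add_measure]
    -- C_ν ≤ C_μ
    have hCle : (∫⁻ x in S, q x Sᶜ ∂ν) ≤ ∫⁻ x in S, q x Sᶜ ∂μ := by
      refine lintegral_mono' ?_ le_rfl
      refine Measure.le_iff.2 fun t ht => ?_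
      rw [Measure.restrict_apply ht, Measure.restrict_apply ht]
      exact hSpos _ (ht.inter hS) (by intro x hx; exact hx.2)
    rw [key μ ‹_› hμ, key ν ‹_› hν] at hBlt
    exact absurd hBlt (not_lt.2 hCle)

lemma unique_lemma {X : Type*} [MeasurableSpace X]
    (q : X → Measure X) (hprob : ∀ x, IsProbabilityMeasure (q x))
    (hmeas : ∀ A : Set X, MeasurableSet A → Measurable fun x => q x A)
    (hreg : ∀ x y, q x ≪ q y)
    (μ ν : Measure X) [IsProbabilityMeasure μ] [IsProbabilityMeasure ν]
    (hμ : ∀ A : Set X, MeasurableSet A → μ A = ∫⁻ x, q x A ∂μ)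
    (hν : ∀ A : Set X, MeasurableSet A → ν A = ∫⁻ x, q x A ∂ν) : μ = ν := by
  ext A hA
  by_contra hne
  rcases lt_or_gt_of_ne hne with h | h
  · exact key_lemma q hprob hmeas hreg ν μ hν hμ A hA h
  · exact key_lemma q hprob hmeas hreg μ ν hμ hν A hA h

/-- Uniqueness of θ-periodic families of measures for a θ-periodic Markovian
semigroup that is regular at `(s, s+θ)` for every `s ∈ [0,θ)`. Here `Q s`
denotes the one-period transition kernel `P(s, ·, s+θ, ·)`. -/
theorem stmt_8 (m : ℕ) (θ : ℝ) (hθ : 0 < θ)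
    (Q : ℝ → (Fin m → ℝ) → Measure (Fin m → ℝ))
    (hQprob : ∀ s x, IsProbabilityMeasure (Q s x))
    (hQmeas : ∀ s, ∀ A : Set (Fin m → ℝ), MeasurableSet A →
      Measurable fun x => Q s x A)
    -- θ-periodicity of the semigroup
    (hper : ∀ s ≥ (0:ℝ), Q (s + θ) = Q s)
    -- regularity at (s, s+θ) for s ∈ [0,θ)
    (hreg : ∀ s ∈ Set.Ico (0:ℝ) θ, ∀ x y, Q s x ≪ Q s y)
    (μ μ' : ℝ → Measure (Fin m → ℝ))
    (hμprob : ∀ s, IsProbabilityMeasure (μ s)) (hμ'prob : ∀ s, IsProbabilityMeasure (μ' s))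
    -- both families are θ-periodic with respect to the semigroup
    (hμinv : ∀ s ≥ (0:ℝ), ∀ A : Set (Fin m → ℝ), MeasurableSet A →
      μ s A = ∫⁻ x, Q s x A ∂ μ s)
    (hμ'inv : ∀ s ≥ (0:ℝ), ∀ A : Set (Fin m → ℝ), MeasurableSet A →
      μ' s A = ∫⁻ x, Q s x A ∂ μ' s) :
    ∀ s ≥ (0:ℝ), μ s = μ' s := by
  have hQeq : ∀ (n : ℕ) (t : ℝ), 0 ≤ t → Q (t + n * θ) = Q t := by
    intro n
    induction n with
    | zero => intro t ht; simp
    | succ n ih =>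
      intro t ht
      have hrw : (t + ((n : ℕ) + 1 : ℕ) * θ) = (t + n * θ) + θ := by push_cast; ring
      rw [hrw, hper (t + n * θ) (add_nonneg ht (by positivity)), ih t ht]
  intro s hs
  set n : ℕ := ⌊s / θ⌋₊ with hn
  set s₀ : ℝ := s - n * θ with hs₀def
  have hdiv : 0 ≤ s / θ := div_nonneg hs hθ.le
  have hnle : (n : ℝ) * θ ≤ s := by
    have h1 : (n : ℝ) ≤ s / θ := Nat.floor_le hdiv
    calc (n : ℝ) * θ ≤ (s / θ) * θ := by nlinarith
      _ = s := by field_simp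
  have h0 : 0 ≤ s₀ := by simp [hs₀def]; linarith
  have h1 : s₀ < θ := by
    have h2 : s / θ < n + 1 := Nat.lt_floor_add_one _
    have h3 : s < (n + 1) * θ := by
      calc s = (s / θ) * θ := by field_simp
        _ < (n + 1) * θ := by nlinarith
    simp only [hs₀def]; nlinarith
  have hQs : Q s = Q s₀ := by
    have h4 := hQeq n s₀ h0
    rw [show s₀ + n * θ = s by simp [hs₀def]] at h4
    exact h4
  haveI := hμprob s
  haveI := hμ'prob s
  refine unique_lemma (Q s) (hQprob s) (hQmeas s) ?_ (μ s) (μ' s) (hμinv s hs) (hμ'inv s hs)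
  intro x y
  rw [hQs]
  exact hreg s₀ ⟨h0, h1⟩ x y
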